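/- Let C be a finite set of m ≥ 1 candidates and let ◁ be a fixed linear order on C. Then the number of linear orders on C that are single-peaked with respect to ◁ is exactly 2^{m−1}. -/

import Mathlib

open Finset

/-- A vote, given as a ranking `v : C ≃ Fin m` (with `v c` the 0-indexed
position of candidate `c`, position 0 being the top), is single-peaked with
respect to the societal axis (the linear order on `C`) if for each ℓ the set
of the ℓ top-ranked candidates is an interval of the axis. -/
def SinglePeaked {C : Type*} [LinearOrder C] {m : ℕ} (v : C ≃ Fin m) : Prop :=
  ∀ ℓ : ℕ, ({c : C | (v c : ℕ) < ℓ} : Set C).OrdConnected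

namespace SPAux

lemma ordConn_of {α : Type*} [Preorder α] (s : Set α)
    (h : ∀ x ∈ s, ∀ y ∈ s, ∀ z, x ≤ z → z ≤ y → z ∈ s) : s.OrdConnected := by
  rw [Set.ordConnected_def]
  intro x hx y hy z hz
  exact h x hx y hy z hz.1 hz.2

lemma ordConn_preimage {α β : Type*} [Preorder α] [Preorder β] {f : α → β}
    (hf : Monotone f) {t : Set β} (ht : t.OrdConnected) : (f ⁻¹' t).OrdConnected := by
  apply ordConn_of
  intro x hx y hy z h1 h2
  exact Set.ordConnected_def.mp ht hx hy ⟨hf h1, hf h2⟩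

/-- transfer of single-peakedness along an order isomorphism -/
lemma sp_comp {C D : Type*} [LinearOrder C] [LinearOrder D] {m : ℕ}
    (e : D ≃o C) (v : C ≃ Fin m) : SinglePeaked (e.toEquiv.trans v) ↔ SinglePeaked v := by
  constructor
  · intro h ℓ
    have : ({c : C | (v c : ℕ) < ℓ} : Set C)
        = e.symm ⁻¹' {d : D | ((e.toEquiv.trans v) d : ℕ) < ℓ} := by
      ext c; simp
    rw [this]
    exact ordConn_preimage e.symm.monotone (h ℓ)
  · intro h ℓ
    have : ({d : D | ((e.toEquiv.trans v) d : ℕ) < ℓ} : Set D)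
        = e ⁻¹' {c : C | (v c : ℕ) < ℓ} := by
      ext d; simp
    rw [this]
    exact ordConn_preimage e.monotone (h ℓ)

variable {m : ℕ}

/-- extend a single-peaked order on `Fin m` to `Fin (m+1)`: the new bottom-ranked
candidate is `0` (if `b = true`) or `last m` (if `b = false`). -/
def ext (b : Bool) (w : Fin m ≃ Fin m) : Fin (m + 1) ≃ Fin (m + 1) :=
  (if b then finSuccEquiv m else finSuccEquivLast).trans
    (w.optionCongr.trans finSuccEquivLast.symm)

@[simp] lemma ext_false_castSucc (w : Fin m ≃ Fin m) (c : Fin m) :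
    ext false w c.castSucc = (w c).castSucc := by
  simp [ext]

@[simp] lemma ext_false_last (w : Fin m ≃ Fin m) :
    ext false w (Fin.last m) = Fin.last m := by
  simp [ext]

@[simp] lemma ext_true_zero (w : Fin m ≃ Fin m) :
    ext true w 0 = Fin.last m := by
  simp [ext]

@[simp] lemma ext_true_succ (w : Fin m ≃ Fin m) (c : Fin m) :
    ext true w c.succ = (w c).castSucc := by
  simp [ext]

lemma sp_ext (b : Bool) (w : Fin m ≃ Fin m) (hw : SinglePeaked w) :
    SinglePeaked (ext b w) := by
  intro ℓ
  rcases le_or_gt ℓ m with hℓ | hℓ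
  · apply ordConn_of
    intro x hx y hy z h1 h2
    simp only [Set.mem_setOf_eq] at hx hy ⊢
    cases b with
    | false =>
      have hxl : x ≠ Fin.last m := by
        rintro rfl; rw [ext_false_last] at hx; simp at hx; omega
      have hyl : y ≠ Fin.last m := by
        rintro rfl; rw [ext_false_last] at hy; simp at hy; omega
      have hzl : z ≠ Fin.last m := by
        rintro rfl
        exact hyl (le_antisymm (Fin.le_last y) h2)
      obtain ⟨x', rfl⟩ := Fin.exists_castSucc_eq.mpr hxl
      obtain ⟨y', rfl⟩ := Fin.exists_castSucc_eq.mpr hyl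
      obtain ⟨z', rfl⟩ := Fin.exists_castSucc_eq.mpr hzl
      rw [ext_false_castSucc] at hx hy ⊢
      simp only [Fin.coe_castSucc] at hx hy ⊢
      exact Set.ordConnected_def.mp (hw ℓ) hx hy
        ⟨Fin.castSucc_le_castSucc_iff.mp h1, Fin.castSucc_le_castSucc_iff.mp h2⟩
    | true =>
      have hx0 : x ≠ 0 := by
        rintro rfl; rw [ext_true_zero] at hx; simp at hx; omega
      have hy0 : y ≠ 0 := by
        rintro rfl; rw [ext_true_zero] at hy; simp at hy; omega
      have hz0 : z ≠ 0 := by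
        rintro rfl
        exact hx0 (le_antisymm h1 (Fin.zero_le x))
      obtain ⟨x', rfl⟩ := Fin.exists_succ_eq.mpr hx0
      obtain ⟨y', rfl⟩ := Fin.exists_succ_eq.mpr hy0
      obtain ⟨z', rfl⟩ := Fin.exists_succ_eq.mpr hz0
      rw [ext_true_succ] at hx hy ⊢
      simp only [Fin.coe_castSucc] at hx hy ⊢
      exact Set.ordConnected_def.mp (hw ℓ) hx hy
        ⟨Fin.succ_le_succ_iff.mp h1, Fin.succ_le_succ_iff.mp h2⟩
  · have : ({c : Fin (m + 1) | ((ext b w) c : ℕ) < ℓ} : Set (Fin (m + 1))) = Set.univ := by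
      ext c
      simp only [Set.mem_setOf_eq, Set.mem_univ, iff_true]
      have := (ext b w c).isLt
      omega
    rw [this]
    exact Set.ordConnected_univ

lemma ext_symm_last (b : Bool) (w : Fin m ≃ Fin m) :
    (ext b w).symm (Fin.last m) = if b then 0 else Fin.last m := by
  cases b
  · simp [Equiv.symm_apply_eq]
  · simp [Equiv.symm_apply_eq]

/-- the bottom-ranked candidate of a single-peaked order is an endpoint -/
lemma peak_end (v : Fin (m + 1) ≃ Fin (m + 1)) (hv : SinglePeaked v) :
    v.symm (Fin.last m) = 0 ∨ v.symm (Fin.last m) = Fin.last m := by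
  by_contra hcon
  push_neg at hcon
  obtain ⟨h0, hl⟩ := hcon
  set p := v.symm (Fin.last m) with hp
  have hvp : v p = Fin.last m := v.apply_symm_apply _
  have hmem : ∀ c : Fin (m + 1), c ≠ p → (v c : ℕ) < m := by
    intro c hc
    have : v c ≠ Fin.last m := by
      intro h
      apply hc
      have := congrArg v.symm h
      rw [Equiv.symm_apply_apply, ← hp] at this
      exact this
    exact Fin.val_lt_last this
  have h0m : (0 : Fin (m + 1)) ∈ {c : Fin (m + 1) | (v c : ℕ) < m} :=
    hmem 0 (fun h => h0 h.symm)
  have hlm : Fin.last m ∈ {c : Fin (m + 1) | (v c : ℕ) < m} :=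
    hmem (Fin.last m) (fun h => hl h.symm)
  have := Set.ordConnected_def.mp (hv m) h0m hlm ⟨Fin.zero_le p, Fin.le_last p⟩
  simp only [Set.mem_setOf_eq, hvp, Fin.val_last] at this
  omega

lemma card_fin_succ (hm : 1 ≤ m) :
    Nat.card {v : Fin (m + 1) ≃ Fin (m + 1) // SinglePeaked v} =
      2 * Nat.card {v : Fin m ≃ Fin m // SinglePeaked v} := by
  have h0l : (0 : Fin (m + 1)) ≠ Fin.last m := by
    intro h
    have := congrArg Fin.val h
    simp at this
    omega
  set F : Bool × {v : Fin m ≃ Fin m // SinglePeaked v} →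
      {v : Fin (m + 1) ≃ Fin (m + 1) // SinglePeaked v} :=
    fun p => ⟨ext p.1 p.2.1, sp_ext p.1 p.2.1 p.2.2⟩ with hF
  have hbij : Function.Bijective F := by
    constructor
    · rintro ⟨b, w, hw⟩ ⟨b', w', hw'⟩ h
      have heq : ext b w = ext b' w' := congrArg Subtype.val h
      have hb : b = b' := by
        have h1 := ext_symm_last b w
        have h2 := ext_symm_last b' w'
        rw [heq, h2] at h1
        cases b <;> cases b' <;> simp_all
      subst hb
      have hww : w = w' := by
        apply Equiv.ext
        intro c
        cases b with
        | false =>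
          have : ext false w c.castSucc = ext false w' c.castSucc := by rw [heq]
          rw [ext_false_castSucc, ext_false_castSucc] at this
          exact Fin.castSucc_injective m this
        | true =>
          have : ext true w c.succ = ext true w' c.succ := by rw [heq]
          rw [ext_true_succ, ext_true_succ] at this
          exact Fin.castSucc_injective m this
      simp [hww]
    · rintro ⟨v, hv⟩
      rcases peak_end v hv with hp | hp
      · -- bottom candidate is 0 : use b = true
        have hv0 : v 0 = Fin.last m := by rw [← hp, Equiv.apply_symm_apply]
        have hne : ∀ c : Fin m, v c.succ ≠ Fin.last m := by
          intro c h
          have : c.succ = (0 : Fin (m + 1)) := by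
            have := congrArg v.symm h
            rwa [Equiv.symm_apply_apply, hp] at this
          exact Fin.succ_ne_zero c this
        set wf : Fin m → Fin m := fun c => (v c.succ).castPred (hne c) with hwf
        have hinj : Function.Injective wf := by
          intro a b hab
          have := congrArg Fin.castSucc hab
          rw [Fin.castSucc_castPred, Fin.castSucc_castPred] at this
          exact Fin.succ_injective m (v.injective this)
        set w : Fin m ≃ Fin m := Equiv.ofBijective wf
          ((Finite.injective_iff_bijective).mp hinj) with hw
        have hwapp : ∀ c, w c = wf c := fun c => rfl
        have hveq : v = ext true w := by
          apply Equiv.ext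
          intro c
          induction c using Fin.cases with
          | zero => rw [ext_true_zero, hv0]
          | succ c' =>
            rw [ext_true_succ, hwapp, hwf]
            exact (Fin.castSucc_castPred _ _).symm
        have hspw : SinglePeaked w := by
          intro ℓ
          apply ordConn_of
          intro x hx y hy z h1 h2
          simp only [Set.mem_setOf_eq, hwapp, hwf] at hx hy ⊢
          simp only [Fin.coe_castPred] at hx hy ⊢
          exact Set.ordConnected_def.mp (hv ℓ) hx hy
            ⟨Fin.succ_le_succ_iff.mpr h1, Fin.succ_le_succ_iff.mpr h2⟩
        exact ⟨(true, ⟨w, hspw⟩), by apply Subtype.ext; exact hveq.symm⟩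
      · -- bottom candidate is last : use b = false
        have hvl : v (Fin.last m) = Fin.last m := by
          have := congrArg v hp
          rw [Equiv.apply_symm_apply] at this
          exact this.symm
        have hne : ∀ c : Fin m, v c.castSucc ≠ Fin.last m := by
          intro c h
          have : c.castSucc = Fin.last m := by
            have := congrArg v.symm h
            rwa [Equiv.symm_apply_apply, hp] at this
          exact absurd this (Fin.ne_of_lt (Fin.castSucc_lt_last c))
        set wf : Fin m → Fin m := fun c => (v c.castSucc).castPred (hne c) with hwf
        have hinj : Function.Injective wf := by
          intro a b hab
          have := congrArg Fin.castSucc hab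
          rw [Fin.castSucc_castPred, Fin.castSucc_castPred] at this
          exact Fin.castSucc_injective m (v.injective this)
        set w : Fin m ≃ Fin m := Equiv.ofBijective wf
          ((Finite.injective_iff_bijective).mp hinj) with hw
        have hwapp : ∀ c, w c = wf c := fun c => rfl
        have hveq : v = ext false w := by
          apply Equiv.ext
          intro c
          induction c using Fin.lastCases with
          | last => rw [ext_false_last, hvl]
          | cast c' =>
            rw [ext_false_castSucc, hwapp, hwf]
            exact (Fin.castSucc_castPred _ _).symm
        have hspw : SinglePeaked w := by
          intro ℓ
          apply ordConn_of
          intro x hx y hy z h1 h2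
          simp only [Set.mem_setOf_eq, hwapp, hwf] at hx hy ⊢
          simp only [Fin.coe_castPred] at hx hy ⊢
          exact Set.ordConnected_def.mp (hv ℓ) hx hy
            ⟨Fin.castSucc_le_castSucc_iff.mpr h1, Fin.castSucc_le_castSucc_iff.mpr h2⟩
        exact ⟨(false, ⟨w, hspw⟩), by apply Subtype.ext; exact hveq.symm⟩
  rw [← Nat.card_eq_of_bijective F hbij, Nat.card_prod]
  simp [Nat.card_eq_fintype_card]

lemma card_fin_one : Nat.card {v : Fin 1 ≃ Fin 1 // SinglePeaked v} = 1 := by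
  rw [Nat.card_eq_one_iff_unique]
  constructor
  · constructor
    intro a b
    apply Subtype.ext
    apply Equiv.ext
    intro x
    exact Subsingleton.elim _ _
  · refine ⟨Equiv.refl _, fun ℓ => ordConn_of _ ?_⟩
    intro x hx y hy z h1 h2
    have : z = x := Subsingleton.elim _ _
    rwa [this]

lemma card_fin (m : ℕ) (hm : 1 ≤ m) :
    Nat.card {v : Fin m ≃ Fin m // SinglePeaked v} = 2 ^ (m - 1) := by
  induction m, hm using Nat.le_induction with
  | base => simpa using card_fin_one
  | succ n hn ih =>
    rw [card_fin_succ hn, ih]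
    calc 2 * 2 ^ (n - 1) = 2 ^ (n - 1 + 1) := by rw [pow_succ]; ring
      _ = 2 ^ (n + 1 - 1) := by congr 1; omega

end SPAux

theorem singlePeaked_count {C : Type*} [Fintype C] [LinearOrder C]
    (hm : 1 ≤ Fintype.card C) :
    Nat.card {v : C ≃ Fin (Fintype.card C) // SinglePeaked v} =
      2 ^ (Fintype.card C - 1) := by
  set m := Fintype.card C with hmdef
  have e : Fin m ≃o C := Fintype.orderIsoFinOfCardEq C rfl
  have key : Nat.card {v : C ≃ Fin m // SinglePeaked v} =
      Nat.card {v : Fin m ≃ Fin m // SinglePeaked v} := by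
    apply Nat.card_congr
    refine Equiv.subtypeEquiv (Equiv.equivCongr e.toEquiv.symm (Equiv.refl (Fin m))) ?_
    intro v
    have heq : (Equiv.equivCongr e.toEquiv.symm (Equiv.refl (Fin m))) v
        = e.toEquiv.trans v := by
      apply Equiv.ext
      intro x
      simp [Equiv.equivCongr]
    rw [heq]
    exact (SPAux.sp_comp e v).symm
  rw [key]
  exact SPAux.card_fin m hm
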